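/- Let 𝒜 be an abelian category admitting countable products (for instance the category of abelian groups). Let X be a cochain complex in 𝒜 and let D : X → X be a chain map of degree −2. With P^n = ∏_{i∈ℕ} X^{n+2i}, D̂(x)_i = D(x_{i+1}), and Y the complex with Y^n = P^n ⊕ P^{n+1} and differential δ(a,b) = (d a + (1 − D̂)(b), −d b), define the chain maps W : Y → Y of degree −2 by W(a,b) = ((D(a_i))_{i∈ℕ}, (D(b_i))_{i∈ℕ}) and S : Y → Y of degree +2 by S(a,b) = ((a_{i+1})_{i∈ℕ}, (b_{i+1})_{i∈ℕ}). Then W ∘ S = S ∘ W = I, where I(a,b) = (D̂ a, D̂ b), both composites are chain homotopic to the identity of Y, and hence W is a chain homotopy equivalence of degree −2; in particular, for every n ∈ ℤ the induced map H^n(Y) → H^{n−2}(Y) on cohomology is an isomorphism. -/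

import Mathlib

open CategoryTheory CategoryTheory.Limits

universe v u

variable {A : Type u} [Category.{v} A] [Abelian A] [HasCountableProducts A]

/-- The object `P^n = ∏_{i∈ℕ} X^{n+2i}`. -/
noncomputable def Pobj (X : CochainComplex A ℤ) (n : ℤ) : A :=
  ∏ᶜ fun i : ℕ => X.X (n + 2 * (i : ℤ))

/-- The (total) componentwise differential of the complex `P`. -/
noncomputable def dP (X : CochainComplex A ℤ) (n m : ℤ) : Pobj X n ⟶ Pobj X m :=
  Pi.lift fun i : ℕ => Pi.π _ i ≫ X.d (n + 2 * (i : ℤ)) (m + 2 * (i : ℤ))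

/-- The map `D̂ : P^n ⟶ P^n`, `D̂(x)_i = D(x_{i+1})`. -/
noncomputable def Dhat (X : CochainComplex A ℤ) (D : ∀ n m : ℤ, X.X n ⟶ X.X m) (n : ℤ) :
    Pobj X n ⟶ Pobj X n :=
  Pi.lift fun i : ℕ =>
    Pi.π (fun j : ℕ => X.X (n + 2 * (j : ℤ))) (i + 1) ≫
      D (n + 2 * ((i + 1 : ℕ) : ℤ)) (n + 2 * (i : ℤ))

/-- The (total) componentwise map `∏ D : P^n ⟶ P^m`. -/
noncomputable def PD (X : CochainComplex A ℤ) (D : ∀ n m : ℤ, X.X n ⟶ X.X m) (n m : ℤ) :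
    Pobj X n ⟶ Pobj X m :=
  Pi.lift fun i : ℕ => Pi.π _ i ≫ D (n + 2 * (i : ℤ)) (m + 2 * (i : ℤ))

/-- The (total) shift `E : P^n ⟶ P^{n+2}`, `E(x)_i = x_{i+1}`. -/
noncomputable def PS (X : CochainComplex A ℤ) (n m : ℤ) : Pobj X n ⟶ Pobj X m :=
  if h : n + 2 = m then
    Pi.lift fun i : ℕ =>
      Pi.π (fun j : ℕ => X.X (n + 2 * (j : ℤ))) (i + 1) ≫
        eqToHom (congrArg X.X
          (by rw [← h]; push_cast; ring : n + 2 * ((i + 1 : ℕ) : ℤ) = m + 2 * (i : ℤ)))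
  else 0

/-- The object `Y^n = P^n ⊕ P^{n+1}`. -/
noncomputable def Yobj (X : CochainComplex A ℤ) (n : ℤ) : A :=
  Pobj X n ⊞ Pobj X (n + 1)

/-- The (total) differential `δ(a,b) = (d a + (1 - D̂) b, -d b)` of the complex `Y`. -/
noncomputable def deltaY (X : CochainComplex A ℤ) (D : ∀ n m : ℤ, X.X n ⟶ X.X m) (n m : ℤ) :
    Yobj X n ⟶ Yobj X m :=
  if h : n + 1 = m then
    (biprod.lift
        (biprod.fst ≫ dP X n (n + 1) + biprod.snd ≫ (𝟙 (Pobj X (n + 1)) - Dhat X D (n + 1)))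
        (biprod.snd ≫ (-dP X (n + 1) (n + 1 + 1))) :
      Yobj X n ⟶ Yobj X (n + 1)) ≫ eqToHom (congrArg (Yobj X) h)
  else 0

/-- The endomorphism `I(a,b) = (D̂ a, D̂ b)` of `Y^n`. -/
noncomputable def Imap (X : CochainComplex A ℤ) (D : ∀ n m : ℤ, X.X n ⟶ X.X m) (n : ℤ) :
    Yobj X n ⟶ Yobj X n :=
  biprod.map (Dhat X D n) (Dhat X D (n + 1))

/-- The (total) degree `-2` chain map `W = (∏D, ∏D) : Y^n ⟶ Y^{n-2}`. -/
noncomputable def Wmap (X : CochainComplex A ℤ) (D : ∀ n m : ℤ, X.X n ⟶ X.X m) (n m : ℤ) :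
    Yobj X n ⟶ Yobj X m :=
  biprod.map (PD X D n m) (PD X D (n + 1) (m + 1))

/-- The (total) degree `+2` shift map `S = (E, E) : Y^n ⟶ Y^{n+2}`. -/
noncomputable def Smap (X : CochainComplex A ℤ) (n m : ℤ) : Yobj X n ⟶ Yobj X m :=
  biprod.map (PS X n m) (PS X (n + 1) (m + 1))

/-- The complex `Y` (the shifted mapping cone of `1 - D̂`). -/
noncomputable def Ycomplex (X : CochainComplex A ℤ) (D : ∀ n m : ℤ, X.X n ⟶ X.X m)
    (s1 : ∀ n m : ℤ, ¬(ComplexShape.up ℤ).Rel n m → deltaY X D n m = 0)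
    (s2 : ∀ n m k : ℤ, (ComplexShape.up ℤ).Rel n m → (ComplexShape.up ℤ).Rel m k →
      deltaY X D n m ≫ deltaY X D m k = 0) :
    CochainComplex A ℤ :=
  ⟨fun n => Yobj X n, fun n m => deltaY X D n m, s1, s2⟩

/-- The complex `Y` shifted by `-2`, with `n`-th term `Y^{n-2}`. -/
noncomputable def YcomplexShift (X : CochainComplex A ℤ) (D : ∀ n m : ℤ, X.X n ⟶ X.X m)
    (t1 : ∀ n m : ℤ, ¬(ComplexShape.up ℤ).Rel n m → deltaY X D (n - 2) (m - 2) = 0)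
    (t2 : ∀ n m k : ℤ, (ComplexShape.up ℤ).Rel n m → (ComplexShape.up ℤ).Rel m k →
      deltaY X D (n - 2) (m - 2) ≫ deltaY X D (m - 2) (k - 2) = 0) :
    CochainComplex A ℤ :=
  ⟨fun n => Yobj X (n - 2), fun n m => deltaY X D (n - 2) (m - 2), t1, t2⟩
set_option linter.unusedSectionVars false
section Aux

variable (X : CochainComplex A ℤ) (D : ∀ n m : ℤ, X.X n ⟶ X.X m)

lemma eqToHom_D {a b c : ℤ} (h : a = b) (p : X.X a = X.X b) :
    eqToHom p ≫ D b c = D a c := by subst h; simp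

lemma D_eqToHom {a b c : ℤ} (h : b = c) (p : X.X b = X.X c) :
    D a b ≫ eqToHom p = D a c := by subst h; simp

lemma eqToHom_d {a b c : ℤ} (h : a = b) (p : X.X a = X.X b) :
    eqToHom p ≫ X.d b c = X.d a c := by subst h; simp

lemma d_eqToHom {a b c : ℤ} (h : b = c) (p : X.X b = X.X c) :
    X.d a b ≫ eqToHom p = X.d a c := by subst h; simp

lemma PS_PD {a b : ℤ} (h : a + 2 = b) : PS X a b ≫ PD X D b a = Dhat X D a := by
  subst h
  unfold PS PD Dhat Pobj
  rw [dif_pos rfl]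
  apply Pi.hom_ext; intro i
  simp only [Category.assoc, limit.lift_π, Fan.mk_π_app, limit.lift_π_assoc]
  rw [eqToHom_D X D (show a + 2 * ((i+1 : ℕ) : ℤ) = a + 2 + 2 * (i : ℤ) by push_cast; ring)]

lemma PD_PS {a b : ℤ} (h : a + 2 = b) : PD X D b a ≫ PS X a b = Dhat X D b := by
  subst h
  unfold PS PD Dhat Pobj
  rw [dif_pos rfl]
  apply Pi.hom_ext; intro i
  simp only [Category.assoc, limit.lift_π, Fan.mk_π_app, limit.lift_π_assoc]
  rw [D_eqToHom X D (show a + 2 * ((i+1 : ℕ) : ℤ) = a + 2 + 2 * (i : ℤ) by push_cast; ring)]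

lemma Smap_Wmap {a b : ℤ} (h : a + 2 = b) : Smap X a b ≫ Wmap X D b a = Imap X D a := by
  unfold Smap Wmap Imap Yobj
  apply biprod.hom_ext
  · simp [PS_PD X D h]
  · simp [PS_PD X D (show a + 1 + 2 = b + 1 by omega)]

lemma Wmap_Smap {a b : ℤ} (h : a + 2 = b) : Wmap X D b a ≫ Smap X a b = Imap X D b := by
  unfold Smap Wmap Imap Yobj
  apply biprod.hom_ext
  · simp [PD_PS X D h]
  · simp [PD_PS X D (show a + 1 + 2 = b + 1 by omega)]

/-- The homotopy `h(a,b) = (0, a)`. -/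
noncomputable def hY (X : CochainComplex A ℤ) (p q : ℤ) : Yobj X p ⟶ Yobj X q :=
  if h : q + 1 = p then
    biprod.lift 0 (biprod.fst ≫ eqToHom (congrArg (Pobj X) h.symm))
  else 0

lemma hY_zero {p q : ℤ} (h : ¬ q + 1 = p) : hY X p q = 0 := dif_neg h

lemma key1 (m : ℤ) :
    𝟙 (Yobj X (m+1)) - Imap X D (m+1) =
      hY X (m+1) m ≫ deltaY X D m (m+1) + deltaY X D (m+1) (m+1+1) ≫ hY X (m+1+1) (m+1) := by
  unfold hY deltaY Imap Yobj
  rw [dif_pos rfl, dif_pos rfl, dif_pos rfl, dif_pos rfl]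
  simp only [eqToHom_refl, Category.comp_id, Category.id_comp]
  apply biprod.hom_ext
  · simp [biprod.lift_fst]
  · simp

lemma key_flex {m n nn : ℤ} (h1 : m + 1 = n) (h2 : n + 1 = nn) :
    𝟙 (Yobj X n) - Imap X D n =
      hY X n m ≫ deltaY X D m n + deltaY X D n nn ≫ hY X nn n := by
  subst h1; subst h2; exact key1 X D m

lemma PS_dP {a a' b b' : ℤ} (ha : a + 2 = a') (hb : b + 2 = b') :
    PS X a a' ≫ dP X a' b' = dP X a b ≫ PS X b b' := by
  subst ha; subst hb
  unfold PS dP Pobj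
  rw [dif_pos rfl, dif_pos rfl]
  apply Pi.hom_ext; intro i
  simp only [Category.assoc, limit.lift_π, Fan.mk_π_app, limit.lift_π_assoc]
  rw [eqToHom_d X (show a + 2 * ((i+1 : ℕ) : ℤ) = a + 2 + 2 * (i : ℤ) by push_cast; ring),
    d_eqToHom X (show b + 2 * ((i+1 : ℕ) : ℤ) = b + 2 + 2 * (i : ℤ) by push_cast; ring)]

lemma PS_Dhat {a a' : ℤ} (ha : a + 2 = a') :
    PS X a a' ≫ Dhat X D a' = Dhat X D a ≫ PS X a a' := by
  subst ha
  unfold PS Dhat Pobj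
  rw [dif_pos rfl]
  apply Pi.hom_ext; intro i
  simp only [Category.assoc, limit.lift_π, Fan.mk_π_app, limit.lift_π_assoc]
  rw [eqToHom_D X D (show a + 2 * ((i+1+1 : ℕ) : ℤ) = a + 2 + 2 * ((i+1 : ℕ) : ℤ) by push_cast; ring),
    D_eqToHom X D (show a + 2 * ((i+1 : ℕ) : ℤ) = a + 2 + 2 * (i : ℤ) by push_cast; ring)]

lemma eqToHom_Yobj_fst {a b : ℤ} (h : a = b) (p : Yobj X a = Yobj X b)
    (q : Pobj X a = Pobj X b) :
    eqToHom p ≫ biprod.fst = (biprod.fst : Yobj X a ⟶ _) ≫ eqToHom q := by subst h; simp; exact Category.id_comp _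

lemma eqToHom_Yobj_snd {a b : ℤ} (h : a = b) (p : Yobj X a = Yobj X b)
    (q : Pobj X (a+1) = Pobj X (b+1)) :
    eqToHom p ≫ biprod.snd = (biprod.snd : Yobj X a ⟶ _) ≫ eqToHom q := by subst h; simp; exact Category.id_comp _

lemma PS_eqToHom {a b c : ℤ} (h : b = c) (p : Pobj X b = Pobj X c) :
    PS X a b ≫ eqToHom p = PS X a c := by subst h; simp

lemma dP_eqToHom {a b c : ℤ} (h : b = c) (p : Pobj X b = Pobj X c) :
    dP X a b ≫ eqToHom p = dP X a c := by subst h; simp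

lemma Smap_deltaY {a b a' b' : ℤ} (hab : a + 1 = b) (ha : a + 2 = a') (hb : b + 2 = b') :
    Smap X a a' ≫ deltaY X D a' b' = deltaY X D a b ≫ Smap X b b' := by
  subst hab; subst ha
  obtain rfl : b' = a + 2 + 1 := by omega
  unfold Smap deltaY
  rw [dif_pos rfl, dif_pos rfl]
  erw [eqToHom_refl, eqToHom_refl, Category.comp_id, Category.comp_id]
  show (biprod.map (PS X a (a+2)) (PS X (a+1) (a+2+1)) ≫
      biprod.lift (biprod.fst ≫ dP X (a+2) (a+2+1) + biprod.snd ≫ (𝟙 _ - Dhat X D (a+2+1)))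
        (biprod.snd ≫ (-dP X (a+2+1) (a+2+1+1))) : Pobj X a ⊞ Pobj X (a+1) ⟶ _) =
    biprod.lift (biprod.fst ≫ dP X a (a+1) + biprod.snd ≫ (𝟙 _ - Dhat X D (a+1)))
        (biprod.snd ≫ (-dP X (a+1) (a+1+1))) ≫
      biprod.map (PS X (a+1) (a+2+1)) (PS X (a+1+1) (a+2+1+1))
  apply biprod.hom_ext
  · simp [PS_dP X (show a + 2 = a + 2 from rfl) (show a + 1 + 2 = a + 2 + 1 by omega),
      PS_Dhat X D (show a + 1 + 2 = a + 2 + 1 by omega)]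
  · simp [PS_dP X (show a + 1 + 2 = a + 2 + 1 by omega) (show a + 1 + 1 + 2 = a + 2 + 1 + 1 by omega)]
end Aux

theorem W_comp_S_eq_I_and_homotopy_equiv (X : CochainComplex A ℤ)
    (D : ∀ n m : ℤ, X.X n ⟶ X.X m)
    (hD0 : ∀ n m : ℤ, m ≠ n - 2 → D n m = 0)
    (hDcomm : ∀ n : ℤ, D n (n - 2) ≫ X.d (n - 2) (n - 1) = X.d n (n + 1) ≫ D (n + 1) (n - 1)) :
    (∀ n : ℤ, Smap X n (n + 2) ≫ Wmap X D (n + 2) n = Imap X D n) ∧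
    (∀ n : ℤ, Wmap X D n (n - 2) ≫ Smap X (n - 2) n = Imap X D n) ∧
    (∃ h : ∀ p q : ℤ, Yobj X p ⟶ Yobj X q, ∀ n : ℤ,
      𝟙 (Yobj X n) - Smap X n (n + 2) ≫ Wmap X D (n + 2) n =
        h n (n - 1) ≫ deltaY X D (n - 1) n + deltaY X D n (n + 1) ≫ h (n + 1) n) ∧
    (∃ h : ∀ p q : ℤ, Yobj X p ⟶ Yobj X q, ∀ n : ℤ,
      𝟙 (Yobj X n) - Wmap X D n (n - 2) ≫ Smap X (n - 2) n =
        h n (n - 1) ≫ deltaY X D (n - 1) n + deltaY X D n (n + 1) ≫ h (n + 1) n) ∧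
    (∀ (s1 : ∀ n m : ℤ, ¬(ComplexShape.up ℤ).Rel n m → deltaY X D n m = 0)
      (s2 : ∀ n m k : ℤ, (ComplexShape.up ℤ).Rel n m → (ComplexShape.up ℤ).Rel m k →
        deltaY X D n m ≫ deltaY X D m k = 0)
      (t1 : ∀ n m : ℤ, ¬(ComplexShape.up ℤ).Rel n m → deltaY X D (n - 2) (m - 2) = 0)
      (t2 : ∀ n m k : ℤ, (ComplexShape.up ℤ).Rel n m → (ComplexShape.up ℤ).Rel m k →
        deltaY X D (n - 2) (m - 2) ≫ deltaY X D (m - 2) (k - 2) = 0)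
      (hcomm : ∀ n m : ℤ, (ComplexShape.up ℤ).Rel n m →
        Wmap X D n (n - 2) ≫ deltaY X D (n - 2) (m - 2) = deltaY X D n m ≫ Wmap X D m (m - 2))
      (n : ℤ),
      IsIso (HomologicalComplex.homologyMap
        (HomologicalComplex.Hom.mk (fun p => Wmap X D p (p - 2)) hcomm :
          Ycomplex X D s1 s2 ⟶ YcomplexShift X D t1 t2) n)) := by
  refine ⟨fun n => Smap_Wmap X D rfl, fun n => Wmap_Smap X D (by omega),
    ⟨hY X, fun n => ?_⟩, ⟨hY X, fun n => ?_⟩, ?_⟩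
  · rw [Smap_Wmap X D rfl]
    exact key_flex X D (by omega) rfl
  · rw [Wmap_Smap X D (by omega)]
    exact key_flex X D (by omega) rfl
  · intro s1 s2 t1 t2 hcomm n
    let f : Ycomplex X D s1 s2 ⟶ YcomplexShift X D t1 t2 :=
      HomologicalComplex.Hom.mk (fun p => Wmap X D p (p - 2)) hcomm
    let g : YcomplexShift X D t1 t2 ⟶ Ycomplex X D s1 s2 :=
      HomologicalComplex.Hom.mk (fun p => Smap X (p - 2) p)
        (fun i j hij => Smap_deltaY X D (by simp only [ComplexShape.up_Rel] at hij; omega) (by omega) (by omega))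
    have H1 : Homotopy (f ≫ g) (𝟙 (Ycomplex X D s1 s2)) :=
      { hom := fun p q => (-(hY X p q) : (Ycomplex X D s1 s2).X p ⟶ (Ycomplex X D s1 s2).X q)
        zero := fun i j h => by rw [hY_zero X (show ¬ _ by simp only [ComplexShape.up_Rel] at h; omega), neg_zero]; rfl
        comm := fun i => by
          refine Eq.trans ?_ (congrArg (fun t => t + HomologicalComplex.Hom.f (𝟙 (Ycomplex X D s1 s2)) i) (congrArg₂ (· + ·) (dNext_eq _ (show (ComplexShape.up ℤ).Rel i (i+1) from rfl))
            (prevD_eq _ (show (ComplexShape.up ℤ).Rel (i-1) i by simp only [ComplexShape.up_Rel]; omega)))).symm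
          have hk := key_flex X D (show i - 1 + 1 = i by omega) (rfl : i + 1 = i + 1)
          simp only [HomologicalComplex.comp_f, HomologicalComplex.id_f]
          show Wmap X D i (i - 2) ≫ Smap X (i - 2) i =
            deltaY X D i (i+1) ≫ (-(hY X (i+1) i)) + (-(hY X i (i-1))) ≫ deltaY X D (i-1) i +
              𝟙 (Yobj X i)
          rw [Wmap_Smap X D (by omega)]
          have h2 : Imap X D i = 𝟙 (Yobj X i) -
              (hY X i (i-1) ≫ deltaY X D (i-1) i + deltaY X D i (i+1) ≫ hY X (i+1) i) := by
            rw [← hk]; abel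
          rw [h2, Preadditive.comp_neg, Preadditive.neg_comp]; abel }
    have H2 : Homotopy (g ≫ f) (𝟙 (YcomplexShift X D t1 t2)) :=
      { hom := fun p q => (-(hY X (p - 2) (q - 2)) : (YcomplexShift X D t1 t2).X p ⟶ (YcomplexShift X D t1 t2).X q)
        zero := fun i j h => by rw [hY_zero X (show ¬ _ by simp only [ComplexShape.up_Rel] at h; omega), neg_zero]; rfl
        comm := fun i => by
          refine Eq.trans ?_ (congrArg (fun t => t + HomologicalComplex.Hom.f (𝟙 (YcomplexShift X D t1 t2)) i) (congrArg₂ (· + ·) (dNext_eq _ (show (ComplexShape.up ℤ).Rel i (i+1) from rfl))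
            (prevD_eq _ (show (ComplexShape.up ℤ).Rel (i-1) i by simp only [ComplexShape.up_Rel]; omega)))).symm
          have hk := key_flex X D (show (i-1) - 2 + 1 = i - 2 by omega)
            (show (i - 2) + 1 = (i+1) - 2 by omega)
          simp only [HomologicalComplex.comp_f, HomologicalComplex.id_f]
          show Smap X (i - 2) i ≫ Wmap X D i (i - 2) =
            deltaY X D (i-2) ((i+1)-2) ≫ (-(hY X ((i+1)-2) (i-2))) +
              (-(hY X (i-2) ((i-1)-2))) ≫ deltaY X D ((i-1)-2) (i-2) + 𝟙 (Yobj X (i-2))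
          rw [Smap_Wmap X D (by omega)]
          have h2 : Imap X D (i-2) = 𝟙 (Yobj X (i-2)) -
              (hY X (i-2) ((i-1)-2) ≫ deltaY X D ((i-1)-2) (i-2) +
                deltaY X D (i-2) ((i+1)-2) ≫ hY X ((i+1)-2) (i-2)) := by
            rw [← hk]; abel
          rw [h2, Preadditive.comp_neg, Preadditive.neg_comp]; abel }
    let e : HomotopyEquiv (Ycomplex X D s1 s2) (YcomplexShift X D t1 t2) := ⟨f, g, H1, H2⟩
    exact (e.toHomologyIso n).isIso_hom
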